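/- Let X and Y be bounded real random variables with CDFs F_X, F_Y and left-continuous quantile functions q_X(u) = inf{x : F_X(x) ≥ u}, q_Y(u) = inf{x : F_Y(x) ≥ u}. Then X second-order stochastically dominates Y if and only if ∫₀^p q_X(u) du ≥ ∫₀^p q_Y(u) du for every p ∈ [0,1]. -/

import Mathlib

open MeasureTheory

/-- The CDF of a real random variable `X` under `P`. -/
noncomputable def rvCdf {Ω : Type*} [MeasurableSpace Ω] (P : Measure Ω) (X : Ω → ℝ) : ℝ → ℝ :=
  fun x => (P {ω | X ω ≤ x}).toReal

/-- The (left-continuous) quantile function of `X` under `P`. -/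
noncomputable def rvQuantile {Ω : Type*} [MeasurableSpace Ω] (P : Measure Ω) (X : Ω → ℝ) :
    ℝ → ℝ :=
  fun u => sInf {x : ℝ | u ≤ rvCdf P X x}

/-- Second-order stochastic dominance: `X ≿_SOSD Y` iff the integrated CDF of `X`
is everywhere below that of `Y`. -/
def SOSD {Ω : Type*} [MeasurableSpace Ω] (P : Measure Ω) (X Y : Ω → ℝ) : Prop :=
  ∀ t : ℝ, ∫ x in Set.Iic t, rvCdf P X x ≤ ∫ x in Set.Iic t, rvCdf P Y x

open Set
open scoped Topology

set_option linter.unusedSectionVars false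
set_option linter.unusedVariables false

section aux
variable {Ω : Type*} [MeasurableSpace Ω] {P : Measure Ω} [IsProbabilityMeasure P] {Z : Ω → ℝ}

lemma rvCdf_eq_cdf (hZ : Measurable Z) (x : ℝ) :
    rvCdf P Z x = ProbabilityTheory.cdf (P.map Z) x := by
  have : IsProbabilityMeasure (P.map Z) := Measure.isProbabilityMeasure_map hZ.aemeasurable
  rw [ProbabilityTheory.cdf_eq_real, measureReal_def, Measure.map_apply hZ measurableSet_Iic]
  rfl

lemma rvCdf_nonneg (x : ℝ) : 0 ≤ rvCdf P Z x := ENNReal.toReal_nonneg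

lemma rvCdf_le_one (x : ℝ) : rvCdf P Z x ≤ 1 := by
  have h : P {ω | Z ω ≤ x} ≤ 1 := prob_le_one
  simpa [rvCdf] using ENNReal.toReal_mono (by simp) h

lemma rvCdf_mono : Monotone (rvCdf P Z) := by
  intro a b hab
  exact ENNReal.toReal_mono (measure_ne_top _ _)
    (measure_mono (fun ω (h : Z ω ≤ a) => le_trans h hab))

lemma le_rvCdf_of_forall_gt (hZ : Measurable Z) {a u : ℝ} (h : ∀ x, a < x → u ≤ rvCdf P Z x) :
    u ≤ rvCdf P Z a := by
  have : IsProbabilityMeasure (P.map Z) := Measure.isProbabilityMeasure_map hZ.aemeasurable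
  have hrc := (ProbabilityTheory.cdf (P.map Z)).right_continuous a
  have htd : Filter.Tendsto (ProbabilityTheory.cdf (P.map Z)) (𝓝[>] a)
      (𝓝 (ProbabilityTheory.cdf (P.map Z) a)) :=
    hrc.tendsto.mono_left (nhdsWithin_mono a Ioi_subset_Ici_self)
  rw [rvCdf_eq_cdf hZ]
  refine ge_of_tendsto htd ?_
  filter_upwards [self_mem_nhdsWithin] with x hx
  rw [← rvCdf_eq_cdf hZ]
  exact h x hx

variable {C : ℝ}

lemma rvCdf_zero (hb : ∀ ω, |Z ω| ≤ C) {x : ℝ} (hx : x < -C) : rvCdf P Z x = 0 := by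
  have : {ω | Z ω ≤ x} = (∅ : Set Ω) := by
    ext ω
    simp only [mem_setOf_eq, mem_empty_iff_false, iff_false, not_le]
    exact lt_of_lt_of_le hx (neg_le_of_abs_le (hb ω))
  simp [rvCdf, this]

lemma rvCdf_one (hb : ∀ ω, |Z ω| ≤ C) {x : ℝ} (hx : C ≤ x) : rvCdf P Z x = 1 := by
  have : {ω | Z ω ≤ x} = (univ : Set Ω) := by
    ext ω
    simp only [mem_setOf_eq, mem_univ, iff_true]
    exact le_trans (le_of_abs_le (hb ω)) hx
  simp [rvCdf, this]

lemma rvQ_set_nonempty (hb : ∀ ω, |Z ω| ≤ C) {u : ℝ} (hu1 : u ≤ 1) :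
    {x : ℝ | u ≤ rvCdf P Z x}.Nonempty :=
  ⟨C, by simpa [rvCdf_one hb le_rfl] using hu1⟩

lemma rvQ_set_bddBelow (hb : ∀ ω, |Z ω| ≤ C) {u : ℝ} (hu0 : 0 < u) :
    BddBelow {x : ℝ | u ≤ rvCdf P Z x} := by
  refine ⟨-C, fun x hx => ?_⟩
  by_contra hc
  push_neg at hc
  rw [mem_setOf_eq, rvCdf_zero hb hc] at hx
  exact absurd (lt_of_lt_of_le hu0 hx) (lt_irrefl 0)

lemma rvQ_le (hb : ∀ ω, |Z ω| ≤ C) {u t : ℝ} (hu0 : 0 < u) (h : u ≤ rvCdf P Z t) :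
    rvQuantile P Z u ≤ t :=
  csInf_le (rvQ_set_bddBelow hb hu0) h

lemma le_rvQ (hb : ∀ ω, |Z ω| ≤ C) {u : ℝ} (hu0 : 0 < u) (hu1 : u ≤ 1) :
    -C ≤ rvQuantile P Z u := by
  refine le_csInf (rvQ_set_nonempty hb hu1) (fun x hx => ?_)
  by_contra hc
  push_neg at hc
  rw [mem_setOf_eq, rvCdf_zero hb hc] at hx
  exact absurd (lt_of_lt_of_le hu0 hx) (lt_irrefl 0)

lemma rvQ_le_C (hb : ∀ ω, |Z ω| ≤ C) {u : ℝ} (hu0 : 0 < u) (hu1 : u ≤ 1) :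
    rvQuantile P Z u ≤ C :=
  rvQ_le hb hu0 (by rw [rvCdf_one hb le_rfl]; exact hu1)

lemma le_rvCdf_of_rvQ_le (hZ : Measurable Z) (hb : ∀ ω, |Z ω| ≤ C) {u t : ℝ}
    (hu0 : 0 < u) (hu1 : u ≤ 1) (h : rvQuantile P Z u ≤ t) : u ≤ rvCdf P Z t := by
  refine le_rvCdf_of_forall_gt hZ (fun x hx => ?_)
  have hlt : sInf {x : ℝ | u ≤ rvCdf P Z x} < x := lt_of_le_of_lt h hx
  obtain ⟨y, hy, hyx⟩ := (csInf_lt_iff (rvQ_set_bddBelow hb hu0) (rvQ_set_nonempty hb hu1)).1 hlt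
  exact le_trans hy (rvCdf_mono hyx.le)

lemma rvQ_mono (hb : ∀ ω, |Z ω| ≤ C) {u v : ℝ} (hu0 : 0 < u) (huv : u ≤ v) (hv1 : v ≤ 1) :
    rvQuantile P Z u ≤ rvQuantile P Z v :=
  csInf_le_csInf (rvQ_set_bddBelow hb hu0) (rvQ_set_nonempty hb hv1)
    (fun x hx => le_trans huv hx)

/-- Monotone global extension of the quantile function. -/
noncomputable def rvQext (P : Measure Ω) (Z : Ω → ℝ) (C : ℝ) : ℝ → ℝ :=
  fun u => if u ≤ 0 then -C else rvQuantile P Z (min u 1)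

lemma rvQext_eq (hu : u ∈ Set.Ioc (0:ℝ) 1) : rvQext P Z C u = rvQuantile P Z u := by
  rw [rvQext, if_neg (not_le.2 hu.1), min_eq_left hu.2]

lemma rvQext_mono (hb : ∀ ω, |Z ω| ≤ C) : Monotone (rvQext P Z C) := by
  intro u v huv
  unfold rvQext
  by_cases hv : v ≤ 0
  · rw [if_pos (le_trans huv hv), if_pos hv]
  · push_neg at hv
    rw [if_neg (not_le.2 hv)]
    by_cases hu : u ≤ 0
    · rw [if_pos hu]
      exact le_rvQ hb (by positivity) (min_le_right _ _)
    · push_neg at hu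
      rw [if_neg (not_le.2 hu)]
      exact rvQ_mono hb (by positivity) (min_le_min huv le_rfl) (min_le_right _ _)

lemma rvQext_bdd (hb : ∀ ω, |Z ω| ≤ C) (hC : 0 ≤ C) (u : ℝ) : |rvQext P Z C u| ≤ C := by
  rw [abs_le]
  unfold rvQext
  by_cases hu : u ≤ 0
  · rw [if_pos hu]; constructor <;> linarith
  · push_neg at hu
    rw [if_neg (not_le.2 hu)]
    exact ⟨le_rvQ hb (by positivity) (min_le_right _ _),
      rvQ_le_C hb (by positivity) (min_le_right _ _)⟩

lemma rvQext_integrableOn (hb : ∀ ω, |Z ω| ≤ C) (hC : 0 ≤ C) (a b : ℝ) :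
    IntegrableOn (rvQext P Z C) (Ioc a b) volume := by
  refine Measure.integrableOn_of_bounded (M := C) (by simp [Real.volume_Ioc])
    ((rvQext_mono hb).measurable.aestronglyMeasurable) (ae_of_all _ fun u => ?_)
  rw [Real.norm_eq_abs]
  exact rvQext_bdd hb hC u

lemma rvCdf_integrableOn (hb : ∀ ω, |Z ω| ≤ C) (t : ℝ) :
    IntegrableOn (rvCdf P Z) (Iic t) volume := by
  set a := min t (-C - 1) with ha
  have h1 : IntegrableOn (rvCdf P Z) (Iic a) volume := by
    refine (integrableOn_congr_fun (g := fun _ => (0:ℝ)) (fun x hx => ?_) measurableSet_Iic).2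
      (integrableOn_zero)
    exact rvCdf_zero hb (lt_of_le_of_lt (le_trans hx (min_le_right _ _)) (by linarith))
  have h2 : IntegrableOn (rvCdf P Z) (Ioc a t) volume := by
    refine Measure.integrableOn_of_bounded (M := 1) (by simp [Real.volume_Ioc])
      (rvCdf_mono.measurable.aestronglyMeasurable) (ae_of_all _ fun x => ?_)
    rw [Real.norm_eq_abs, abs_of_nonneg (rvCdf_nonneg x)]
    exact rvCdf_le_one x
  have := h1.union h2
  rwa [Iic_union_Ioc_eq_Iic (min_le_left _ _)] at this

/-- Key identity: integrated CDF equals `F t * t` minus the cumulative quantile at `F t`. -/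
lemma rvKey (hZ : Measurable Z) (hb : ∀ ω, |Z ω| ≤ C) (hC : 0 ≤ C) (t : ℝ) :
    ∫ x in Iic t, rvCdf P Z x
      = rvCdf P Z t * t - ∫ u in Ioc (0:ℝ) (rvCdf P Z t), rvQext P Z C u := by
  by_cases ht : t < -C
  · rw [rvCdf_zero hb ht,
      setIntegral_congr_fun (g := fun _ => (0:ℝ)) measurableSet_Iic
        (fun x hx => rvCdf_zero hb (lt_of_le_of_lt hx ht))]
    simp
  · push_neg at ht
    set p0 := rvCdf P Z t with hp0def
    have hp00 : 0 ≤ p0 := rvCdf_nonneg t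
    have hp01 : p0 ≤ 1 := rvCdf_le_one t
    set A : Set (ℝ × ℝ) := {z | z.1 ∈ Ioc (0:ℝ) p0 ∧ z.2 ∈ Icc (rvQext P Z C z.1) t} with hAdef
    have hA : MeasurableSet A := by
      have : A = (Prod.fst ⁻¹' Ioc (0:ℝ) p0) ∩
          ({z : ℝ × ℝ | rvQext P Z C z.1 ≤ z.2} ∩ (Prod.snd ⁻¹' Iic t)) := by
        ext z; simp [hAdef, Set.mem_Icc, and_assoc]
      rw [this]
      exact (measurable_fst measurableSet_Ioc).inter
        ((measurableSet_le ((rvQext_mono hb).measurable.comp measurable_fst) measurable_snd).inter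
          (measurable_snd measurableSet_Iic))
    -- left slices
    have hleft : (volume.prod volume) A
        = ∫⁻ u in Ioc (0:ℝ) p0, ENNReal.ofReal (t - rvQext P Z C u) := by
      rw [Measure.prod_apply hA]
      rw [← lintegral_indicator (measurableSet_Ioc)]
      congr 1
      ext u
      by_cases hu : u ∈ Ioc (0:ℝ) p0
      · have hsl : Prod.mk u ⁻¹' A = Icc (rvQext P Z C u) t := by
          ext x; exact ⟨fun h => h.2, fun h => ⟨hu, h⟩⟩
        rw [hsl, Set.indicator_of_mem hu, Real.volume_Icc]
      · have hsl : Prod.mk u ⁻¹' A = ∅ := by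
          ext x; exact ⟨fun h => absurd h.1 hu, fun h => h.elim⟩
        rw [hsl, Set.indicator_of_notMem hu]
        simp
    -- right slices
    have hright : (volume.prod volume) A
        = ∫⁻ x in Iic t, ENNReal.ofReal (rvCdf P Z x) := by
      rw [Measure.prod_apply_symm hA]
      rw [← lintegral_indicator (measurableSet_Iic)]
      congr 1
      ext x
      by_cases hx : x ∈ Iic t
      · have hsl : (fun u => (u, x)) ⁻¹' A = Ioc (0:ℝ) (rvCdf P Z x) := by
          ext u
          simp only [hAdef, Set.mem_preimage, Set.mem_setOf_eq, Set.mem_Ioc, Set.mem_Icc]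
          constructor
          · rintro ⟨⟨hu0, hup0⟩, hqu, -⟩
            refine ⟨hu0, ?_⟩
            rw [rvQext_eq ⟨hu0, le_trans hup0 hp01⟩] at hqu
            exact le_rvCdf_of_rvQ_le hZ hb hu0 (le_trans hup0 hp01) hqu
          · rintro ⟨hu0, hufx⟩
            have hfxp0 : rvCdf P Z x ≤ p0 := rvCdf_mono hx
            have hu1 : u ≤ 1 := le_trans hufx (rvCdf_le_one x)
            refine ⟨⟨hu0, le_trans hufx hfxp0⟩, ?_, hx⟩
            rw [rvQext_eq ⟨hu0, hu1⟩]
            exact rvQ_le hb hu0 hufx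
        rw [hsl, Set.indicator_of_mem hx, Real.volume_Ioc]
        simp
      · have hsl : (fun u => (u, x)) ⁻¹' A = ∅ := by
          ext u
          simp only [hAdef, Set.mem_preimage, Set.mem_setOf_eq, Set.mem_Icc,
            Set.mem_empty_iff_false, iff_false]
          rintro ⟨-, -, hxt⟩
          exact hx hxt
        rw [hsl, Set.indicator_of_notMem hx]
        simp
    -- convert to Bochner integrals
    have hint1 : IntegrableOn (fun u => t - rvQext P Z C u) (Ioc (0:ℝ) p0) volume :=
      (integrableOn_const (by simp [Real.volume_Ioc])).sub
        (rvQext_integrableOn hb hC 0 p0)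
    have hnn1 : ∀ u ∈ Ioc (0:ℝ) p0, 0 ≤ t - rvQext P Z C u := by
      intro u hu
      rw [sub_nonneg, rvQext_eq ⟨hu.1, le_trans hu.2 hp01⟩]
      exact rvQ_le hb hu.1 hu.2
    have hofr1 : ENNReal.ofReal (∫ u in Ioc (0:ℝ) p0, (t - rvQext P Z C u))
        = ∫⁻ u in Ioc (0:ℝ) p0, ENNReal.ofReal (t - rvQext P Z C u) :=
      ofReal_integral_eq_lintegral_ofReal hint1
        ((ae_restrict_iff' measurableSet_Ioc).2 (ae_of_all _ hnn1))
    have hofr2 : ENNReal.ofReal (∫ x in Iic t, rvCdf P Z x)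
        = ∫⁻ x in Iic t, ENNReal.ofReal (rvCdf P Z x) :=
      ofReal_integral_eq_lintegral_ofReal (rvCdf_integrableOn hb t)
        (ae_of_all _ fun x => rvCdf_nonneg x)
    have heq : ∫ x in Iic t, rvCdf P Z x = ∫ u in Ioc (0:ℝ) p0, (t - rvQext P Z C u) := by
      have h1 : ENNReal.ofReal (∫ x in Iic t, rvCdf P Z x)
          = ENNReal.ofReal (∫ u in Ioc (0:ℝ) p0, (t - rvQext P Z C u)) := by
        rw [hofr1, hofr2, ← hleft, ← hright]
      have hn1 : 0 ≤ ∫ x in Iic t, rvCdf P Z x :=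
        setIntegral_nonneg measurableSet_Iic (fun x _ => rvCdf_nonneg x)
      have hn2 : 0 ≤ ∫ u in Ioc (0:ℝ) p0, (t - rvQext P Z C u) :=
        setIntegral_nonneg measurableSet_Ioc hnn1
      exact (ENNReal.ofReal_eq_ofReal_iff hn1 hn2).1 h1
    rw [heq, integral_sub (integrableOn_const (s := Ioc (0:ℝ) p0) (μ := volume) (C := t) (by simp [Real.volume_Ioc]))
      (rvQext_integrableOn hb hC 0 p0), setIntegral_const,
      Real.volume_real_Ioc_of_le (by linarith), smul_eq_mul]
    ring_nf

/-- The Legendre-type inequality: `p ↦ p*t - H(p)` is maximized at `p = F t`. -/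
lemma rvIneq (hZ : Measurable Z) (hb : ∀ ω, |Z ω| ≤ C) (hC : 0 ≤ C) {p : ℝ}
    (hp : p ∈ Icc (0:ℝ) 1) (t : ℝ) :
    p * t - ∫ u in Ioc (0:ℝ) p, rvQext P Z C u
      ≤ rvCdf P Z t * t - ∫ u in Ioc (0:ℝ) (rvCdf P Z t), rvQext P Z C u := by
  set p0 := rvCdf P Z t with hp0def
  have hp00 : 0 ≤ p0 := rvCdf_nonneg t
  have hp01 : p0 ≤ 1 := rvCdf_le_one t
  have hconst : ∀ a b : ℝ, a ≤ b → ∫ u in Ioc a b, t ∂volume = (b - a) * t := by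
    intro a b hab
    rw [setIntegral_const, Real.volume_real_Ioc_of_le (by linarith), smul_eq_mul]
  rcases le_total p p0 with h | h
  · have hsplit : ∫ u in Ioc (0:ℝ) p0, rvQext P Z C u
        = (∫ u in Ioc (0:ℝ) p, rvQext P Z C u) + ∫ u in Ioc p p0, rvQext P Z C u := by
      rw [← setIntegral_union (Set.Ioc_disjoint_Ioc_of_le le_rfl) measurableSet_Ioc
        (rvQext_integrableOn hb hC 0 p) (rvQext_integrableOn hb hC p p0),
        Set.Ioc_union_Ioc_eq_Ioc hp.1 h]
    have hbound : ∫ u in Ioc p p0, rvQext P Z C u ≤ (p0 - p) * t := by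
      rw [← hconst p p0 h]
      refine setIntegral_mono_on (rvQext_integrableOn hb hC p p0)
        (integrableOn_const (by simp [Real.volume_Ioc])) measurableSet_Ioc ?_
      intro u hu
      have hu0 : 0 < u := lt_of_le_of_lt hp.1 hu.1
      rw [rvQext_eq ⟨hu0, le_trans hu.2 hp01⟩]
      exact rvQ_le hb hu0 hu.2
    linarith
  · have hsplit : ∫ u in Ioc (0:ℝ) p, rvQext P Z C u
        = (∫ u in Ioc (0:ℝ) p0, rvQext P Z C u) + ∫ u in Ioc p0 p, rvQext P Z C u := by
      rw [← setIntegral_union (Set.Ioc_disjoint_Ioc_of_le le_rfl) measurableSet_Ioc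
        (rvQext_integrableOn hb hC 0 p0) (rvQext_integrableOn hb hC p0 p),
        Set.Ioc_union_Ioc_eq_Ioc hp00 h]
    have hbound : (p - p0) * t ≤ ∫ u in Ioc p0 p, rvQext P Z C u := by
      rw [← hconst p0 p h]
      refine setIntegral_mono_on (integrableOn_const (by simp [Real.volume_Ioc]))
        (rvQext_integrableOn hb hC p0 p) measurableSet_Ioc ?_
      intro u hu
      have hu0 : 0 < u := lt_of_le_of_lt hp00 hu.1
      have hu1 : u ≤ 1 := le_trans hu.2 hp.2
      rw [rvQext_eq ⟨hu0, hu1⟩]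
      by_contra hc
      push_neg at hc
      exact absurd (le_rvCdf_of_rvQ_le hZ hb hu0 hu1 hc.le) (not_le.2 hu.1)
    linarith

/-- Attainment: the cumulative quantile equals `p * q p - G (q p)`. -/
lemma rvAttain (hZ : Measurable Z) (hb : ∀ ω, |Z ω| ≤ C) (hC : 0 ≤ C) {p : ℝ}
    (hp0 : 0 < p) (hp1 : p ≤ 1) :
    ∫ u in Ioc (0:ℝ) p, rvQext P Z C u
      = p * rvQuantile P Z p - ∫ x in Iic (rvQuantile P Z p), rvCdf P Z x := by
  set t := rvQuantile P Z p with htdef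
  set s := rvCdf P Z t with hsdef
  have hps : p ≤ s := le_rvCdf_of_rvQ_le hZ hb hp0 hp1 le_rfl
  have hs1 : s ≤ 1 := rvCdf_le_one t
  have hkey := rvKey (P := P) hZ hb hC t
  have hsplit : ∫ u in Ioc (0:ℝ) s, rvQext P Z C u
      = (∫ u in Ioc (0:ℝ) p, rvQext P Z C u) + ∫ u in Ioc p s, rvQext P Z C u := by
    rw [← setIntegral_union (Set.Ioc_disjoint_Ioc_of_le le_rfl) measurableSet_Ioc
      (rvQext_integrableOn hb hC 0 p) (rvQext_integrableOn hb hC p s),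
      Set.Ioc_union_Ioc_eq_Ioc hp0.le hps]
  have hconst : ∫ u in Ioc p s, rvQext P Z C u = (s - p) * t := by
    rw [setIntegral_congr_fun (g := fun _ => t) measurableSet_Ioc ?_, setIntegral_const,
      Real.volume_real_Ioc_of_le (by linarith), smul_eq_mul]
    intro u hu
    have hu0 : 0 < u := lt_trans hp0 hu.1
    have hu1 : u ≤ 1 := le_trans hu.2 hs1
    rw [rvQext_eq ⟨hu0, hu1⟩]
    exact le_antisymm (rvQ_le hb hu0 hu.2) (rvQ_mono hb hp0 hu.1.le hu1)
  rw [← hsdef] at hkey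
  rw [hsplit, hconst] at hkey
  linarith

/-- Bridge: the interval integral of the quantile equals the set integral of the extension. -/
lemma rvBridge (hb : ∀ ω, |Z ω| ≤ C) {p : ℝ} (hp0 : 0 ≤ p) (hp1 : p ≤ 1) :
    ∫ u in (0:ℝ)..p, rvQuantile P Z u = ∫ u in Ioc (0:ℝ) p, rvQext P Z C u := by
  rw [intervalIntegral.integral_of_le hp0]
  exact setIntegral_congr_fun measurableSet_Ioc
    (fun u hu => (rvQext_eq ⟨hu.1, le_trans hu.2 hp1⟩).symm)

end aux

/-- For bounded random variables, `X ≿_SOSD Y` iff the cumulative quantile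
function of `X` dominates that of `Y` on `[0,1]`. -/
theorem sosd_iff_cumulative_quantiles
    {Ω : Type*} [MeasurableSpace Ω] (P : Measure Ω) [IsProbabilityMeasure P]
    (X Y : Ω → ℝ) (hX : Measurable X) (hY : Measurable Y)
    (hbX : ∃ C, ∀ ω, |X ω| ≤ C) (hbY : ∃ C, ∀ ω, |Y ω| ≤ C) :
    SOSD P X Y ↔
      ∀ p ∈ Set.Icc (0:ℝ) 1,
        ∫ u in (0:ℝ)..p, rvQuantile P Y u ≤ ∫ u in (0:ℝ)..p, rvQuantile P X u := by
  obtain ⟨CX, hbX⟩ := hbX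
  obtain ⟨CY, hbY⟩ := hbY
  set C := max (max CX CY) 0 with hCdef
  have hC : 0 ≤ C := le_max_right _ _
  have hbX' : ∀ ω, |X ω| ≤ C :=
    fun ω => le_trans (hbX ω) (le_trans (le_max_left _ _) (le_max_left _ _))
  have hbY' : ∀ ω, |Y ω| ≤ C :=
    fun ω => le_trans (hbY ω) (le_trans (le_max_right _ _) (le_max_left _ _))
  constructor
  · intro hsosd p hp
    rcases eq_or_lt_of_le hp.1 with h0 | h0
    · rw [← h0]
      simp
    · rw [rvBridge (C := C) hbY' hp.1 hp.2, rvBridge (C := C) hbX' hp.1 hp.2]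
      set t := rvQuantile P Y p with htdef
      have e1 := rvAttain (P := P) hY hbY' hC h0 hp.2
      have e2 := rvIneq (P := P) hX hbX' hC hp t
      have e3 := rvKey (P := P) hX hbX' hC t
      have e4 := hsosd t
      linarith
  · intro hq t
    have hkX := rvKey (P := P) hX hbX' hC t
    have hkY := rvKey (P := P) hY hbY' hC t
    have hpX : rvCdf P X t ∈ Icc (0:ℝ) 1 := ⟨rvCdf_nonneg t, rvCdf_le_one t⟩
    have h1 := hq (rvCdf P X t) hpX
    rw [rvBridge (C := C) hbY' hpX.1 hpX.2, rvBridge (C := C) hbX' hpX.1 hpX.2] at h1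
    have h2 := rvIneq (P := P) hY hbY' hC hpX t
    linarith
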